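/- Let A = v μᵀ − diag(μ) with μ_i > 0, v_i > 0, ∑ v_i = 1. Then for any initial condition y(0) ∈ ℝ^I, the solution y(t) = e^{At} y(0) of ẏ = A y converges as t → ∞ to y^∞ = (𝟙ᵀ y(0)) · (D^{-1}v)/(𝟙ᵀ D^{-1}v). -/

import Mathlib

open Matrix BigOperators Filter

/-- the solution `y(t) = e^{At} y(0)` of `ẏ = A y` converges as `t → ∞`
to `(𝟙ᵀ y(0)) • (D⁻¹v)/(𝟙ᵀ D⁻¹ v)`. -/
theorem exp_At_mulVec_tendsto
    (I : ℕ) (hI : 0 < I) (μ v : Fin I → ℝ)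
    (hμ : ∀ i, 0 < μ i) (hv : ∀ i, 0 < v i) (hvsum : ∑ i, v i = 1)
    (A : Matrix (Fin I) (Fin I) ℝ)
    (hA : A = Matrix.of (fun i j => v i * μ j) - Matrix.diagonal μ)
    (y0 : Fin I → ℝ) (yinf : Fin I → ℝ)
    (hyinf : yinf = fun i => (∑ j, y0 j) * (v i / μ i) / (∑ j, v j / μ j)) :
    Tendsto (fun t : ℝ => (NormedSpace.exp (t • A)).mulVec y0) atTop (nhds yinf) := by
  classical
  -- basic square-root identities
  set s : Fin I → ℝ := fun i => Real.sqrt (v i) / Real.sqrt (μ i) with hs_def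
  set u : Fin I → ℝ := fun i => Real.sqrt (v i) * Real.sqrt (μ i) with hu_def
  have hsqv : ∀ i, Real.sqrt (v i) * Real.sqrt (v i) = v i :=
    fun i => Real.mul_self_sqrt (hv i).le
  have hsqμ : ∀ i, Real.sqrt (μ i) * Real.sqrt (μ i) = μ i :=
    fun i => Real.mul_self_sqrt (hμ i).le
  have hsqμ0 : ∀ i, Real.sqrt (μ i) ≠ 0 := fun i => (Real.sqrt_pos.mpr (hμ i)).ne'
  have hspos : ∀ i, 0 < s i := fun i =>
    div_pos (Real.sqrt_pos.mpr (hv i)) (Real.sqrt_pos.mpr (hμ i))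
  have hs0 : ∀ i, s i ≠ 0 := fun i => (hspos i).ne'
  have hsu : ∀ i, s i * u i = v i := by
    intro i
    simp only [hs_def, hu_def]
    have h1 : Real.sqrt (v i) / Real.sqrt (μ i) * (Real.sqrt (v i) * Real.sqrt (μ i))
        = (Real.sqrt (v i) * Real.sqrt (v i)) * (Real.sqrt (μ i) / Real.sqrt (μ i)) := by ring
    rw [h1, div_self (hsqμ0 i), mul_one, hsqv i]
  have hμdiv : ∀ i, μ i / Real.sqrt (μ i) = Real.sqrt (μ i) := by
    intro i
    exact Real.div_sqrt
  have hus : ∀ i, μ i * s i = u i := by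
    intro i
    simp only [hs_def, hu_def]
    rw [mul_div_assoc', mul_comm (μ i), mul_div_assoc, hμdiv i]
  have huu : ∀ i, u i * u i = v i * μ i := by
    intro i
    have h1 : μ i * (s i * u i) = μ i * v i := by rw [hsu i]
    rw [← mul_assoc, hus i] at h1
    rw [h1]; ring
  have hss : ∀ i, s i * s i = v i / μ i := by
    intro i
    simp only [hs_def]
    rw [div_mul_div_comm, hsqv i, hsqμ i]
  -- the symmetrized matrix
  set B : Matrix (Fin I) (Fin I) ℝ :=
    Matrix.of (fun i j => u i * u j) - Matrix.diagonal μ with hB_def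
  have hBH : B.IsHermitian := by
    show Bᴴ = B
    ext i j
    rcases eq_or_ne i j with rfl | hij
    · simp [hB_def, Matrix.conjTranspose_apply]
    · simp [hB_def, Matrix.conjTranspose_apply, Matrix.diagonal_apply_ne _ hij,
        Matrix.diagonal_apply_ne _ (Ne.symm hij), mul_comm]
  set S : Matrix (Fin I) (Fin I) ℝ := Matrix.diagonal s with hS_def
  set S' : Matrix (Fin I) (Fin I) ℝ := Matrix.diagonal (fun i => (s i)⁻¹) with hS'_def
  have hSS' : S * S' = 1 := by
    rw [hS_def, hS'_def, Matrix.diagonal_mul_diagonal]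
    rw [show (fun i => s i * (s i)⁻¹) = fun _ => (1:ℝ) from
      funext fun i => mul_inv_cancel₀ (hs0 i)]
    exact Matrix.diagonal_one
  have hS'S : S' * S = 1 := by
    rw [hS_def, hS'_def, Matrix.diagonal_mul_diagonal]
    rw [show (fun i => (s i)⁻¹ * s i) = fun _ => (1:ℝ) from
      funext fun i => inv_mul_cancel₀ (hs0 i)]
    exact Matrix.diagonal_one
  have hSunit : IsUnit S := ⟨⟨S, S', hSS', hS'S⟩, rfl⟩
  have hSinv : S⁻¹ = S' := Matrix.inv_eq_right_inv hSS'
  -- conjugation relation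
  have hAB : A = S * B * S' := by
    rw [hA]
    ext i j
    rw [hS_def, hS'_def, hB_def, Matrix.mul_diagonal, Matrix.diagonal_mul]
    rcases eq_or_ne i j with rfl | hij
    · simp only [Matrix.sub_apply, Matrix.of_apply, Matrix.diagonal_apply_eq]
      rw [huu i]
      have h2 : s i * (v i * μ i - μ i) * (s i)⁻¹ = (v i * μ i - μ i) * (s i * (s i)⁻¹) := by
        ring
      rw [h2, mul_inv_cancel₀ (hs0 i), mul_one]
    · simp only [Matrix.sub_apply, Matrix.of_apply, Matrix.diagonal_apply_ne _ hij]
      have : s i * (u i * u j) * (s j)⁻¹ = (s i * u i) * (u j * (s j)⁻¹) := by ring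
      rw [sub_zero, sub_zero, this, hsu i, ← hus j, mul_assoc, mul_inv_cancel₀ (hs0 j), mul_one]
  -- spectral decomposition of B
  set U : Matrix (Fin I) (Fin I) ℝ := (hBH.eigenvectorUnitary : Matrix (Fin I) (Fin I) ℝ)
    with hU_def
  set lam : Fin I → ℝ := hBH.eigenvalues with hlam_def
  have hUU : star U * U = 1 := Matrix.mem_unitaryGroup_iff'.mp hBH.eigenvectorUnitary.2
  have hUU' : U * star U = 1 := Matrix.mem_unitaryGroup_iff.mp hBH.eigenvectorUnitary.2
  have hUinv : U⁻¹ = star U := Matrix.inv_eq_right_inv hUU'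
  have hUunit : IsUnit U := ⟨⟨U, star U, hUU', hUU⟩, rfl⟩
  have hspec : B = U * Matrix.diagonal lam * star U := by
    have h := hBH.spectral_theorem
    rwa [show RCLike.ofReal ∘ hBH.eigenvalues = lam from funext fun k => rfl] at h
  -- quadratic form of B
  have hBx : ∀ x : Fin I → ℝ, ∀ i, (B *ᵥ x) i = u i * (∑ j, u j * x j) - μ i * x i := by
    intro x i
    rw [hB_def, Matrix.sub_mulVec]
    simp only [Pi.sub_apply, Matrix.mulVec_diagonal]
    congr 1
    simp [Matrix.mulVec, dotProduct, Finset.mul_sum, mul_assoc]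
  have hquad : ∀ x : Fin I → ℝ,
      x ⬝ᵥ (B *ᵥ x) = (∑ j, u j * x j) ^ 2 - ∑ j, μ j * x j ^ 2 := by
    intro x
    calc x ⬝ᵥ (B *ᵥ x) = ∑ i, (x i * u i * (∑ j, u j * x j) - μ i * x i ^ 2) :=
          Finset.sum_congr rfl fun i _ => by rw [hBx x i]; ring
      _ = (∑ i, x i * u i) * (∑ j, u j * x j) - ∑ i, μ i * x i ^ 2 := by
          rw [Finset.sum_sub_distrib, Finset.sum_mul]
      _ = (∑ j, u j * x j) ^ 2 - ∑ j, μ j * x j ^ 2 := by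
          rw [show (∑ i, x i * u i) = ∑ j, u j * x j from
            Finset.sum_congr rfl fun i _ => mul_comm _ _]
          ring
  have hcauchy : ∀ x : Fin I → ℝ, (∑ j, u j * x j) ^ 2 ≤ ∑ j, μ j * x j ^ 2 := by
    intro x
    have h := Finset.sum_mul_sq_le_sq_mul_sq Finset.univ
      (fun j => Real.sqrt (v j)) (fun j => Real.sqrt (μ j) * x j)
    have e1 : ∀ j : Fin I, Real.sqrt (v j) * (Real.sqrt (μ j) * x j) = u j * x j := by
      intro j; rw [hu_def]; ring
    have e2 : ∀ j : Fin I, Real.sqrt (v j) ^ 2 = v j := fun j => Real.sq_sqrt (hv j).le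
    have e3 : ∀ j : Fin I, (Real.sqrt (μ j) * x j) ^ 2 = μ j * x j ^ 2 := by
      intro j; rw [mul_pow, Real.sq_sqrt (hμ j).le]
    simp_rw [e1, e2, e3, hvsum, one_mul] at h
    exact h
  -- eigenvalues are nonpositive
  have hlam : ∀ k, lam k ≤ 0 := by
    intro k
    set x : Fin I → ℝ := ⇑(hBH.eigenvectorBasis k) with hx_def
    have hBxk : B *ᵥ x = lam k • x := hBH.mulVec_eigenvectorBasis k
    have hx1 : ∑ i, x i * x i = 1 := by
      have h := orthonormal_iff_ite.mp hBH.eigenvectorBasis.orthonormal k k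
      rw [if_pos rfl, PiLp.inner_apply] at h
      simpa [hx_def, RCLike.inner_apply, conj_trivial, mul_comm, ← pow_two] using h
    have h2 : x ⬝ᵥ (B *ᵥ x) = lam k := by
      rw [hBxk, dotProduct_smul, smul_eq_mul]
      rw [show x ⬝ᵥ x = ∑ i, x i * x i from rfl, hx1, mul_one]
    have h3 := hquad x
    have h4 := hcauchy x
    linarith [h2, h3, h4]
  -- the exponential formula
  have hexp : ∀ t : ℝ, NormedSpace.exp (t • A)
      = S * (U * Matrix.diagonal (fun k => Real.exp (t * lam k)) * star U) * S' := by
    intro t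
    have hdiag : Matrix.diagonal (fun k => t * lam k) = t • Matrix.diagonal lam := by
      rw [← Matrix.diagonal_smul]; rfl
    have h1 : t • A = S * (U * Matrix.diagonal (fun k => t * lam k) * star U) * S' := by
      rw [hAB, hspec, hdiag, mul_smul_comm, smul_mul_assoc, mul_smul_comm, smul_mul_assoc]
    rw [h1, ← hSinv, Matrix.exp_conj S _ hSunit, ← hUinv,
      Matrix.exp_conj U _ hUunit, Matrix.exp_diagonal, hSinv, hUinv]
    congr 2
    · congr 1
      funext k
      rw [Pi.exp_def, ← Real.exp_eq_exp_ℝ]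
  -- limit objects
  set e : Fin I → ℝ := fun k => if lam k = 0 then 1 else 0 with he_def
  set M : Matrix (Fin I) (Fin I) ℝ := U * Matrix.diagonal e * star U with hM_def
  -- continuity of the assembled map
  have hF : Continuous fun d : Fin I → ℝ =>
      (S * (U * Matrix.diagonal d * star U) * S').mulVec y0 :=
    ((continuous_const.matrix_mul (((continuous_const.matrix_mul
      continuous_id.matrix_diagonal).matrix_mul continuous_const))).matrix_mul
      continuous_const).matrix_mulVec continuous_const
  -- convergence of the diagonal entries
  have hd : Tendsto (fun t : ℝ => fun k => Real.exp (t * lam k)) atTop (nhds e) := by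
    rw [tendsto_pi_nhds]
    intro k
    by_cases h : lam k = 0
    · simp only [he_def, h, mul_zero, Real.exp_zero, if_pos]
      exact tendsto_const_nhds
    · have hneg : lam k < 0 := lt_of_le_of_ne (hlam k) h
      simp only [he_def, if_neg h]
      exact Real.tendsto_exp_atBot.comp (tendsto_id.atTop_mul_const_of_neg hneg)
  have hlim : Tendsto (fun t : ℝ => (NormedSpace.exp (t • A)).mulVec y0) atTop
      (nhds ((S * M * S').mulVec y0)) := by
    refine Tendsto.congr (fun t => ?_) ((hF.tendsto e).comp hd)
    rw [hexp t]
    rfl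
  -- identify the limit
  have hMB : B * M = 0 := by
    have hlame : Matrix.diagonal lam * Matrix.diagonal e = 0 := by
      rw [Matrix.diagonal_mul_diagonal]
      rw [show (fun k => lam k * e k) = fun _ => (0:ℝ) from funext fun k => by
        by_cases h : lam k = 0 <;> simp [he_def, h]]
      exact Matrix.diagonal_zero
    rw [hspec, hM_def]
    calc U * Matrix.diagonal lam * star U * (U * Matrix.diagonal e * star U)
        = U * (Matrix.diagonal lam * ((star U * U) * (Matrix.diagonal e * star U))) := by
          simp only [Matrix.mul_assoc]
      _ = U * ((Matrix.diagonal lam * Matrix.diagonal e) * star U) := by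
          rw [hUU, one_mul, Matrix.mul_assoc]
      _ = 0 := by rw [hlame, Matrix.zero_mul, Matrix.mul_zero]
  have hMfix : ∀ x : Fin I → ℝ, B *ᵥ x = 0 → M *ᵥ x = x := by
    intro x hx
    set z : Fin I → ℝ := star U *ᵥ x with hz
    rw [hspec] at hx
    have hUz : U *ᵥ (Matrix.diagonal lam *ᵥ z) = 0 := by
      rw [hz, Matrix.mulVec_mulVec, Matrix.mulVec_mulVec]
      exact hx
    have hzero : Matrix.diagonal lam *ᵥ z = 0 := by
      have h := congrArg (fun w => star U *ᵥ w) hUz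
      simpa [Matrix.mulVec_mulVec, ← Matrix.mul_assoc, hUU, Matrix.mulVec_zero,
        Matrix.one_mulVec] using h
    have hez : Matrix.diagonal e *ᵥ z = z := by
      funext k
      have hk : lam k * z k = 0 := by
        have h := congrFun hzero k
        simpa [Matrix.mulVec_diagonal] using h
      rw [Matrix.mulVec_diagonal]
      by_cases h : lam k = 0
      · simp [he_def, h]
      · have hzk : z k = 0 := by
          rcases mul_eq_zero.mp hk with h' | h'
          · exact absurd h' h
          · exact h'
        simp [he_def, h, hzk]
    rw [hM_def]
    calc (U * Matrix.diagonal e * star U) *ᵥ x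
        = U *ᵥ (Matrix.diagonal e *ᵥ (star U *ᵥ x)) := by
          rw [Matrix.mulVec_mulVec, Matrix.mulVec_mulVec]
      _ = U *ᵥ z := by rw [← hz, hez]
      _ = x := by rw [hz, Matrix.mulVec_mulVec, hUU', Matrix.one_mulVec]
  have hMsymm : ∀ i j, M i j = M j i := by
    have hH : M.IsHermitian := by
      rw [hM_def, Matrix.star_eq_conjTranspose]
      exact Matrix.isHermitian_mul_mul_conjTranspose U (Matrix.isHermitian_diagonal e)
    intro i j
    have h := congrFun (congrFun hH j) i
    simpa [Matrix.conjTranspose_apply] using h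
  have hker : ∀ x : Fin I → ℝ, B *ᵥ x = 0 → ∀ i, x i = (∑ j, u j * x j) * s i := by
    intro x hx i
    have h0 := congrFun hx i
    rw [hBx x i] at h0
    simp only [Pi.zero_apply] at h0
    have h1 : μ i * x i = u i * ∑ j, u j * x j := by linarith
    have h2 : μ i * x i = μ i * ((∑ j, u j * x j) * s i) := by
      rw [h1, ← hus i]; ring
    exact mul_left_cancel₀ (hμ i).ne' h2
  have hBs : B *ᵥ s = 0 := by
    funext i
    rw [hBx s i]
    have hsum1 : (∑ j, u j * s j) = 1 := by
      calc ∑ j, u j * s j = ∑ j, v j :=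
            Finset.sum_congr rfl fun j _ => by rw [mul_comm, hsu j]
        _ = 1 := hvsum
    simp [hsum1, hus i]
  have hMs : M *ᵥ s = s := hMfix s hBs
  set n : ℝ := ∑ j, s j * s j with hn_def
  have hnI : Nonempty (Fin I) := ⟨⟨0, hI⟩⟩
  have hnpos : 0 < n := Finset.sum_pos (fun j _ => mul_pos (hspos j) (hspos j))
    Finset.univ_nonempty
  have hn_eq : n = ∑ j, v j / μ j := Finset.sum_congr rfl fun j _ => hss j
  set c : Fin I → ℝ := fun j => ∑ k, u k * M k j with hc_def
  have hcol : ∀ j i, M i j = c j * s i := by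
    intro j i
    refine hker (fun i' => M i' j) ?_ i
    have hcolv : B *ᵥ (fun i' => M i' j) = fun i' => (B * M) i' j := by
      funext i'
      simp [Matrix.mulVec, dotProduct, Matrix.mul_apply]
    rw [hcolv, hMB]
    funext i'
    simp
  have i0 : Fin I := ⟨0, hI⟩
  have hsumcs : (∑ j, c j * s j) = 1 := by
    have h := congrFun hMs i0
    have h2 : (M *ᵥ s) i0 = s i0 * ∑ j, c j * s j := by
      rw [show (M *ᵥ s) i0 = ∑ j, M i0 j * s j from rfl, Finset.mul_sum]
      exact Finset.sum_congr rfl fun j _ => by rw [hcol j i0]; ring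
    rw [h2] at h
    have h3 : s i0 * (∑ j, c j * s j) = s i0 * 1 := by rw [mul_one]; exact h
    exact mul_left_cancel₀ (hs0 i0) h3
  have hcval : ∀ j, c j * n = s j := by
    intro j
    calc c j * n = ∑ i, c j * s i * s i := by
          rw [hn_def, Finset.mul_sum]
          exact Finset.sum_congr rfl fun i _ => by ring
      _ = ∑ i, c i * s j * s i := Finset.sum_congr rfl fun i _ => by
          rw [show c j * s i = M i j from (hcol j i).symm, hMsymm i j, hcol i j]
      _ = s j * ∑ i, c i * s i := by
          rw [Finset.mul_sum]
          exact Finset.sum_congr rfl fun i _ => by ring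
      _ = s j := by rw [hsumcs, mul_one]
  have hMij : ∀ i j, M i j = s i * s j / n := by
    intro i j
    rw [hcol j i, show c j = s j / n from by
      rw [eq_div_iff hnpos.ne']; exact hcval j]
    ring
  have hfinal : (S * M * S').mulVec y0 = yinf := by
    funext i
    rw [hyinf]
    have hentry : ∀ j, (S * M * S') i j = v i / μ i / n * (s j * (s j)⁻¹) := by
      intro j
      rw [hS_def, hS'_def, Matrix.mul_diagonal, Matrix.diagonal_mul, hMij i j, ← hss i]
      ring
    calc (S * M * S').mulVec y0 i = ∑ j, (S * M * S') i j * y0 j := rfl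
      _ = ∑ j, v i / μ i / n * y0 j := Finset.sum_congr rfl fun j _ => by
          rw [hentry j, mul_inv_cancel₀ (hs0 j), mul_one]
      _ = v i / μ i / n * ∑ j, y0 j := by rw [Finset.mul_sum]
      _ = (∑ j, y0 j) * (v i / μ i) / (∑ j, v j / μ j) := by rw [← hn_eq]; ring
  rw [← hfinal]
  exact hlim
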